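/- Let p < 0, C* > 0, m₁, m₂ > 0, and define α(x) = m₁/(1 + exp(-m₂·x)). Let S, I : [t₀, ∞) → ℝ be differentiable functions with 0 < S(t) and 0 < I(t) ≤ 1 for all t ≥ t₀, satisfying S' = -α(I)·I·S and I' = α(I)·I·S - C*·I^(p+1) on [t₀, ∞). Then for every ε with 0 < ε < I(t₀) there exists t > t₀ such that I(t) < ε. -/

import Mathlib

/-- Key claim in the proof of Lemma 3.4: after the transition time, with p < 0,
the adopter population I eventually falls below any positive threshold ε < I(t₀). -/
theorem I_falls_below_any_threshold (p Cstar m₁ m₂ t₀ : ℝ)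
    (hp : p < 0) (hC : 0 < Cstar) (hm1 : 0 < m₁) (hm2 : 0 < m₂)
    (α : ℝ → ℝ) (hα : ∀ x, α x = m₁ / (1 + Real.exp (-m₂ * x)))
    (S I : ℝ → ℝ)
    (hSpos : ∀ t ≥ t₀, 0 < S t)
    (hIpos : ∀ t ≥ t₀, 0 < I t ∧ I t ≤ 1)
    (hS : ∀ t ≥ t₀, HasDerivAt S (-(α (I t)) * I t * S t) t)
    (hI : ∀ t ≥ t₀, HasDerivAt I (α (I t) * I t * S t - Cstar * I t ^ (p + 1)) t) :
    ∀ ε : ℝ, 0 < ε → ε < I t₀ → ∃ t > t₀, I t < ε := by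
  intro ε hε hεI
  by_contra h
  push_neg at h
  have hεle : ∀ t ≥ t₀, ε ≤ I t := by
    intro t ht
    rcases eq_or_lt_of_le ht with rfl | ht'
    · exact hεI.le
    · exact h t ht'
  set g : ℝ → ℝ := fun t => S t + I t + Cstar * ε * t with hg
  have hgderiv : ∀ t ≥ t₀, HasDerivAt g (Cstar * ε - Cstar * I t ^ (p + 1)) t := by
    intro t ht
    have h1 := ((hS t ht).add (hI t ht)).add ((hasDerivAt_id t).const_mul (Cstar * ε))
    convert h1 using 1
    · rfl
    · rfl
    · rfl
    ring
  have hanti : AntitoneOn g (Set.Ici t₀) := by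
    apply antitoneOn_of_deriv_nonpos (convex_Ici t₀)
    · intro t ht
      exact (hgderiv t ht).continuousAt.continuousWithinAt
    · intro t ht
      rw [interior_Ici] at ht
      exact (hgderiv t ht.le).differentiableAt.differentiableWithinAt
    · intro t ht
      rw [interior_Ici] at ht
      rw [(hgderiv t ht.le).deriv]
      have hI' := hIpos t ht.le
      have h1 : I t ≤ I t ^ (p + 1) := by
        have h2 := Real.rpow_le_rpow_of_exponent_ge hI'.1 hI'.2
          (by linarith : p + 1 ≤ (1 : ℝ))
        simpa using h2
      have h2 : ε ≤ I t ^ (p + 1) := le_trans (hεle t ht.le) h1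
      nlinarith
  have hCε : 0 < Cstar * ε := mul_pos hC hε
  have hN0 : 0 < S t₀ + I t₀ := by
    have := hSpos t₀ le_rfl; have := (hIpos t₀ le_rfl).1; linarith
  set T : ℝ := t₀ + (S t₀ + I t₀) / (Cstar * ε) + 1 with hT
  have hTgt : t₀ < T := by
    have : 0 < (S t₀ + I t₀) / (Cstar * ε) := div_pos hN0 hCε
    simp only [hT]; linarith
  have hgle : g T ≤ g t₀ := hanti (Set.self_mem_Ici) (Set.mem_Ici.mpr hTgt.le) hTgt.le
  have hNT : 0 < S T + I T := by
    have := hSpos T hTgt.le; have := (hIpos T hTgt.le).1; linarith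
  have hkey : Cstar * ε * ((S t₀ + I t₀) / (Cstar * ε)) = S t₀ + I t₀ :=
    mul_div_cancel₀ _ (ne_of_gt hCε)
  simp only [hg, hT] at hgle
  nlinarith [hgle, hkey, hNT]
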